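/- arXiv:2305.16695 — 6 statements merged into one kernel-verified Lean document; each statement's English description precedes it below -/
import Mathlib

section
/- Let r̂^{a,b}_i(x) = a·ν_i(x) + b where ν_i is the relative relevance. Then r̂^{a,b} defines a valid probability distribution over the n publishers for every strategy profile (i.e., each r̂^{a,b}_i(x) ∈ [0,1] and they sum to 1), and is strictly increasing in ν_i, if and only if 0 < a ≤ 1/n and b = 1/n. -/
noncomputable def relRel (n : ℕ) (dstar : Fin n → ℝ) (i : Fin n) : ℝ :=
  (1 / ((n : ℝ) - 1)) * (∑ j ∈ Finset.univ.erase i, dstar j) - dstar i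

/-- r̂^{a,b}_i(x) = a·ν_i(x) + b. -/
noncomputable def linRank (n : ℕ) (a b : ℝ) (dstar : Fin n → ℝ) (i : Fin n) : ℝ :=
  a * relRel n dstar i + b

lemma hn1' (n : ℕ) (hn : 2 ≤ n) : (0:ℝ) < (n : ℝ) - 1 := by
  have : (2:ℝ) ≤ n := by exact_mod_cast hn
  linarith

lemma sum_relRel (n : ℕ) (hn : 2 ≤ n) (dstar : Fin n → ℝ) :
    ∑ i, relRel n dstar i = 0 := by
  have hne : ((n : ℝ) - 1) ≠ 0 := ne_of_gt (hn1' n hn)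
  simp only [relRel]
  have h : ∀ i : Fin n, ∑ j ∈ Finset.univ.erase i, dstar j
      = (∑ j, dstar j) - dstar i := fun i =>
    Finset.sum_erase_eq_sub (Finset.mem_univ i)
  simp_rw [h]
  rw [Finset.sum_sub_distrib, ← Finset.mul_sum, Finset.sum_sub_distrib,
    Finset.sum_const, Finset.card_univ, Fintype.card_fin, nsmul_eq_mul]
  field_simp
  ring

lemma relRel_mem (n : ℕ) (hn : 2 ≤ n) (dstar : Fin n → ℝ)
    (h : ∀ i, dstar i ∈ Set.Icc (0 : ℝ) 1) (i : Fin n) :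
    relRel n dstar i ∈ Set.Icc (-1 : ℝ) 1 := by
  have hpos := hn1' n hn
  have hcard : (Finset.univ.erase i).card = n - 1 := by
    simp [Finset.card_erase_of_mem]
  have hT0 : 0 ≤ ∑ j ∈ Finset.univ.erase i, dstar j :=
    Finset.sum_nonneg fun j _ => (h j).1
  have hT1 : (∑ j ∈ Finset.univ.erase i, dstar j) ≤ (n : ℝ) - 1 := by
    calc (∑ j ∈ Finset.univ.erase i, dstar j) ≤ ∑ _j ∈ Finset.univ.erase i, (1:ℝ) :=
          Finset.sum_le_sum fun j _ => (h j).2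
      _ = ((n - 1 : ℕ) : ℝ) := by rw [Finset.sum_const, hcard]; simp
      _ = (n : ℝ) - 1 := by
          have : (1:ℕ) ≤ n := by omega
          push_cast [this]; ring
  constructor
  · have : 0 ≤ (1 / ((n : ℝ) - 1)) * (∑ j ∈ Finset.univ.erase i, dstar j) :=
      mul_nonneg (by positivity) hT0
    have := (h i).2
    simp only [relRel]; linarith
  · have h1 : (1 / ((n : ℝ) - 1)) * (∑ j ∈ Finset.univ.erase i, dstar j) ≤ 1 := by
      rw [div_mul_eq_mul_div, one_mul, div_le_one hpos]; exact hT1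
    have := (h i).1
    simp only [relRel]; linarith

/-- r̂^{a,b} is a valid probability distribution for every profile and is strictly
increasing in ν_i (i.e. a > 0) iff 0 < a ≤ 1/n and b = 1/n. -/
theorem linRank_valid_iff (n : ℕ) (hn : 2 ≤ n) (a b : ℝ) :
    ((∀ dstar : Fin n → ℝ, (∀ i, dstar i ∈ Set.Icc (0 : ℝ) 1) →
        (∑ i, linRank n a b dstar i) = 1 ∧
        ∀ i, linRank n a b dstar i ∈ Set.Icc (0 : ℝ) 1) ∧ 0 < a)
    ↔ (0 < a ∧ a ≤ 1 / (n : ℝ) ∧ b = 1 / (n : ℝ)) := by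
  have hnpos : (0:ℝ) < n := by positivity
  have hn2 : (2:ℝ) ≤ n := by exact_mod_cast hn
  have hsum : ∀ dstar : Fin n → ℝ, ∑ i, linRank n a b dstar i = n * b := by
    intro dstar
    simp only [linRank]
    rw [Finset.sum_add_distrib, ← Finset.mul_sum, sum_relRel n hn dstar,
      Finset.sum_const, Finset.card_univ, Fintype.card_fin, nsmul_eq_mul]
    ring
  constructor
  · rintro ⟨hval, ha⟩
    have i0 : Fin n := ⟨0, by omega⟩
    -- b = 1/n from the sum condition
    have hb : b = 1 / (n : ℝ) := by
      have h0 := (hval (fun _ => 0) (fun i => by simp)).1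
      rw [hsum] at h0
      field_simp
      linarith
    refine ⟨ha, ?_, hb⟩
    -- use dstar = indicator of i0 : relRel at i0 = -1
    set d : Fin n → ℝ := fun j => if j = i0 then 1 else 0 with hd
    have hdmem : ∀ i, d i ∈ Set.Icc (0:ℝ) 1 := by
      intro i; by_cases h : i = i0 <;> simp [hd, h]
    have hrr : relRel n d i0 = -1 := by
      simp only [relRel, hd]
      rw [Finset.sum_eq_zero]
      · simp
      · intro j hj
        rw [Finset.mem_erase] at hj
        simp [hj.1]
    have := ((hval d hdmem).2 i0).1
    simp only [linRank, hrr] at this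
    rw [hb] at this
    linarith
  · rintro ⟨ha, ha2, hb⟩
    refine ⟨?_, ha⟩
    intro dstar hmem
    constructor
    · rw [hsum, hb]; field_simp
    · intro i
      obtain ⟨h1, h2⟩ := relRel_mem n hn dstar hmem i
      have hb1 : (1:ℝ)/n ≤ 1 - 1/n := by
        rw [le_sub_iff_add_le, show (1:ℝ)/n + 1/n = 2/n by ring, div_le_one hnpos]
        exact hn2
      constructor
      · simp only [linRank, hb]
        nlinarith
      · simp only [linRank, hb]
        nlinarith
end

section
/- There exists no slope a with 0 < a < 1/n and no constant α > 2 such that the linear RRP ranking function r̂^a (with intercept 1/n) is α-DIEC; equivalently, for every such a, the limit as n → ∞ of the extreme-profile ratio g_n(a) = ((a·n+1)(n−1))/(n(1−a)−1) is at most 2. -/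
open Filter

/-- g_n(a) = ((a·n + 1)(n − 1)) / (n(1 − a) − 1), the extreme-profile ratio of
the linear RRP ranking function with slope a. -/
noncomputable def gfun (n : ℕ) (a : ℝ) : ℝ :=
  ((a * n + 1) * ((n : ℝ) - 1)) / ((n : ℝ) * (1 - a) - 1)

/-- For every slope family a = c/n with 0 < c < 1 (i.e. 0 < a < 1/n), the
extreme-profile ratio g_n(c/n) tends to c + 1 ≤ 2; in particular it does not
tend to any α > 2, so no such r̂^a is α-DIEC with α > 2. -/
theorem no_linRank_DIEC_above_two (c : ℝ) (hc0 : 0 < c) (hc1 : c < 1) :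
    Tendsto (fun n : ℕ => gfun n (c / n)) atTop (nhds (c + 1)) ∧
    c + 1 ≤ 2 ∧
    ∀ α : ℝ, 2 < α → ¬ Tendsto (fun n : ℕ => gfun n (c / n)) atTop (nhds α) := by
  have hden : Tendsto (fun n : ℕ => (n : ℝ) - c - 1) atTop atTop := by
    have := tendsto_natCast_atTop_atTop (R := ℝ)
    exact (tendsto_atTop_add_const_right _ (-c - 1) this).congr (by intro n; ring)
  have hzero : Tendsto (fun n : ℕ => (c + 1) * c / ((n : ℝ) - c - 1)) atTop (nhds 0) :=
    Tendsto.div_atTop tendsto_const_nhds hden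
  have hmain : Tendsto (fun n : ℕ => gfun n (c / n)) atTop (nhds (c + 1)) := by
    have h : Tendsto (fun n : ℕ => (c + 1) + (c + 1) * c / ((n : ℝ) - c - 1)) atTop
        (nhds (c + 1 + 0)) := tendsto_const_nhds.add hzero
    rw [add_zero] at h
    refine h.congr' ?_
    filter_upwards [eventually_ge_atTop 2] with n hn
    have hn0 : (n : ℝ) ≠ 0 := by positivity
    have hd : (n : ℝ) - c - 1 ≠ 0 := by
      have : (2 : ℝ) ≤ (n : ℝ) := by exact_mod_cast hn
      nlinarith
    unfold gfun
    have hden' : (n : ℝ) * (1 - c / n) - 1 = (n : ℝ) - c - 1 := by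
      field_simp
    rw [hden']
    field_simp
    ring
  refine ⟨hmain, by linarith, fun α hα h => ?_⟩
  have := tendsto_nhds_unique hmain h
  linarith
end

section
/- The two-player one-dimensional publishers game with the PRP ranking function, λ > 1/2, distance d(x,y) = |x−y|, initial documents x_0^1 = x_0^2 = 0 and information need x* = 1, has no pure Nash equilibrium: for every strategy profile (x_1, x_2) ∈ [0,1]², some player has a strictly profitable deviation. -/
noncomputable section

/-- Probability that a player at position `xi` is ranked first against an
opponent at `xj`, under PRP with information need x* = 1. -/
def prp (xi xj : ℝ) : ℝ :=
  if |xi - 1| < |xj - 1| then 1 else if |xi - 1| = |xj - 1| then 1 / 2 else 0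

/-- Utility of a player at `xi` against `xj`: ranking probability minus λ·|xi − 0|. -/
def uPRP (lam xi xj : ℝ) : ℝ := prp xi xj - lam * xi

lemma abs_sub_one {x : ℝ} (hx : x ≤ 1) : |x - 1| = 1 - x := by
  rw [abs_of_nonpos (by linarith)]; ring

lemma prp_win {a b : ℝ} (hab : a < b) (hb : b ≤ 1) : prp b a = 1 := by
  have ha : a ≤ 1 := hab.le.trans hb
  simp only [prp, abs_sub_one hb, abs_sub_one ha]
  rw [if_pos (by linarith)]

/-- Deviation lemma for the strict winner. -/
lemma dev_win (lam a b : ℝ) (hlam : 0 < lam) (ha : 0 ≤ a) (hab : a < b) (hb : b ≤ 1) :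
    ∃ y ∈ Set.Icc (0 : ℝ) 1, uPRP lam b a < uPRP lam y a := by
  refine ⟨(a + b) / 2, ⟨by linarith, by linarith⟩, ?_⟩
  have h1 : prp b a = 1 := prp_win hab hb
  have h2 : prp ((a + b) / 2) a = 1 := prp_win (by linarith) (by linarith)
  simp only [uPRP, h1, h2]
  nlinarith

/-- The two-player PRP publishers game with λ > 1/2, x_0^1 = x_0^2 = 0 and
x* = 1 has no pure Nash equilibrium. -/
theorem prp_no_pure_nash (lam : ℝ) (hlam : 1 / 2 < lam)
    (x₁ x₂ : ℝ) (h₁ : x₁ ∈ Set.Icc (0 : ℝ) 1) (h₂ : x₂ ∈ Set.Icc (0 : ℝ) 1) :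
    (∃ y ∈ Set.Icc (0 : ℝ) 1, uPRP lam x₁ x₂ < uPRP lam y x₂) ∨
    (∃ y ∈ Set.Icc (0 : ℝ) 1, uPRP lam x₂ x₁ < uPRP lam y x₁) := by
  obtain ⟨h10, h11⟩ := h₁
  obtain ⟨h20, h21⟩ := h₂
  have hlam0 : (0:ℝ) < lam := by linarith
  rcases lt_trichotomy x₁ x₂ with h | h | h
  · exact Or.inr (dev_win lam x₁ x₂ hlam0 h10 h h21)
  · subst h
    left
    have heq : prp x₁ x₁ = 1 / 2 := by
      simp [prp]
    rcases eq_or_lt_of_le h11 with h1 | h1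
    · -- x₁ = 1, deviate to 0
      refine ⟨0, ⟨le_refl 0, zero_le_one⟩, ?_⟩
      subst h1
      have hp0 : prp 0 1 = 0 := by norm_num [prp]
      simp only [uPRP, heq, hp0]
      linarith
    · -- x₁ < 1, deviate slightly up
      set e := min (1 - x₁) (1 / (4 * lam)) with he
      have he0 : 0 < e := lt_min (by linarith) (by positivity)
      have he1 : e ≤ 1 - x₁ := min_le_left _ _
      have he2 : lam * e ≤ 1 / 4 := by
        have : e ≤ 1 / (4 * lam) := min_le_right _ _
        calc lam * e ≤ lam * (1 / (4 * lam)) := by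
              exact mul_le_mul_of_nonneg_left this hlam0.le
          _ = 1 / 4 := by field_simp
      refine ⟨x₁ + e, ⟨by linarith, by linarith⟩, ?_⟩
      have hp : prp (x₁ + e) x₁ = 1 := prp_win (by linarith) (by linarith)
      simp only [uPRP, heq, hp]
      nlinarith
  · exact Or.inl (dev_win lam x₂ x₁ hlam0 h20 h h11)

end
end

section
/- In the two-player PRP publishers game with λ > 1/2 (d(x,y)=|x−y|, x_0^1 = x_0^2 = 0, x* = 1), no profile with x_1 = x_2 is a pure Nash equilibrium: if x_1 = x_2 = 1 then deviating to 0 strictly improves utility (0 > 1/2 − λ), and if x_1 = x_2 = 1 − ε for ε > 0 then deviating to 1 − ε + δ for sufficiently small δ > 0 strictly improves utility. -/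
noncomputable section

/-- In the two-player PRP game with λ > 1/2, no diagonal profile x₁ = x₂ is a
pure Nash equilibrium: at x₁ = x₂ = 1 deviating to 0 strictly improves
(0 > 1/2 − λ), and at x₁ = x₂ = 1 − ε (ε > 0) deviating to 1 − ε + δ strictly
improves for sufficiently small δ > 0. -/
theorem prp_no_diagonal_nash (lam : ℝ) (hlam : 1 / 2 < lam) :
    (uPRP lam 1 1 < uPRP lam 0 1 ∧ uPRP lam 1 1 = 1 / 2 - lam ∧
      uPRP lam 0 1 = 0) ∧
    (∀ ε : ℝ, 0 < ε → ε ≤ 1 →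
      ∃ δ > 0, 1 - ε + δ ∈ Set.Icc (0 : ℝ) 1 ∧
        uPRP lam (1 - ε) (1 - ε) < uPRP lam (1 - ε + δ) (1 - ε)) := by
  have hlam0 : (0:ℝ) < lam := by linarith
  constructor
  · refine ⟨?_, ?_, ?_⟩ <;> simp [uPRP, prp, abs_of_nonneg] <;> norm_num <;> linarith
  · intro ε hε hε1
    set δ : ℝ := min ε (1 / (2 * lam)) / 2 with hδdef
    have hδpos : 0 < δ := by
      apply half_pos
      exact lt_min hε (by positivity)
    have hδε : δ < ε := by
      have : δ ≤ ε / 2 := by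
        apply div_le_div_of_nonneg_right (min_le_left _ _) (by norm_num)
      linarith
    have hδlam : δ < 1 / (2 * lam) := by
      have : δ ≤ (1 / (2 * lam)) / 2 := by
        apply div_le_div_of_nonneg_right (min_le_right _ _) (by norm_num)
      have h2 : 0 < 1 / (2 * lam) := by positivity
      linarith
    refine ⟨δ, hδpos, ⟨by linarith, by linarith⟩, ?_⟩
    have habs1 : |1 - ε + δ - 1| = ε - δ := by
      rw [abs_of_nonpos (by linarith)]; ring
    have habs2 : |1 - ε - 1| = ε := by
      rw [abs_of_nonpos (by linarith)]; ring
    have hlt : |1 - ε + δ - 1| < |1 - ε - 1| := by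
      rw [habs1, habs2]; linarith
    have hld : lam * δ < 1 / 2 := by
      rw [lt_div_iff₀ (by positivity : (0:ℝ) < 2 * lam)] at hδlam
      nlinarith
    simp only [uPRP, prp, if_pos hlt, lt_irrefl, if_neg (lt_irrefl _), if_pos rfl]
    norm_num
    nlinarith
end
end

section
/- In the two-player PRP publishers game with λ > 1/2, no profile with x_1 ≠ x_2 is a pure Nash equilibrium: WLOG if x_1 < x_2, the losing player 1 has utility −λ x_1 and profits by moving to 0 unless x_1 = 0; and if x_1 = 0, the winning player 2 has utility 1 − λ x_2 with x_2 > 0 and strictly profits by moving to x_2/2 (still winning, at lower cost). -/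
noncomputable section

/-- In the two-player PRP game with λ > 1/2, no profile with x₁ < x₂ is a pure
Nash equilibrium: the losing player 1 has utility −λx₁ and profits by moving
to 0 unless x₁ = 0; and if x₁ = 0, the winning player 2 has utility 1 − λx₂
and strictly profits by moving to x₂/2. -/
theorem prp_no_offdiagonal_nash (lam : ℝ) (hlam : 1 / 2 < lam)
    (x₁ x₂ : ℝ) (h₁ : x₁ ∈ Set.Icc (0 : ℝ) 1) (h₂ : x₂ ∈ Set.Icc (0 : ℝ) 1)
    (hlt : x₁ < x₂) :
    uPRP lam x₁ x₂ = -(lam * x₁) ∧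
    (0 < x₁ → uPRP lam x₁ x₂ < uPRP lam 0 x₂) ∧
    (x₁ = 0 →
      uPRP lam x₂ x₁ = 1 - lam * x₂ ∧ 0 < x₂ ∧
      uPRP lam x₂ x₁ < uPRP lam (x₂ / 2) x₁) := by
  obtain ⟨h10, h11⟩ := h₁
  obtain ⟨h20, h21⟩ := h₂
  have hlam0 : 0 < lam := by linarith
  have ha1 : |x₁ - 1| = 1 - x₁ := by rw [abs_sub_comm]; exact abs_of_nonneg (by linarith)
  have ha2 : |x₂ - 1| = 1 - x₂ := by rw [abs_sub_comm]; exact abs_of_nonneg (by linarith)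
  have hmain : uPRP lam x₁ x₂ = -(lam * x₁) := by
    unfold uPRP prp
    rw [ha1, ha2, if_neg (by linarith), if_neg (by linarith)]
    ring
  refine ⟨hmain, ?_, ?_⟩
  · intro hx1
    have : (0:ℝ) ≤ prp 0 x₂ := by
      unfold prp; split_ifs <;> norm_num
    have h0 : uPRP lam 0 x₂ = prp 0 x₂ := by unfold uPRP; ring
    rw [hmain, h0]
    nlinarith
  · intro hx0
    have hx2 : 0 < x₂ := by linarith [hx0 ▸ hlt]
    have ha0 : |x₁ - 1| = 1 := by rw [hx0]; norm_num
    have hu2 : uPRP lam x₂ x₁ = 1 - lam * x₂ := by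
      unfold uPRP prp
      rw [ha2, ha0, if_pos (by linarith)]
    have hah : |x₂ / 2 - 1| = 1 - x₂ / 2 := by
      rw [abs_sub_comm]; exact abs_of_nonneg (by linarith)
    have hu2' : uPRP lam (x₂ / 2) x₁ = 1 - lam * (x₂ / 2) := by
      unfold uPRP prp
      rw [hah, ha0, if_pos (by linarith)]
    refine ⟨hu2, hx2, ?_⟩
    rw [hu2, hu2']
    nlinarith
end
end

section
/- Every exact potential game with finite strategy sets possesses at least one pure Nash equilibrium, namely any maximizer of the potential function φ. -/
/-- Every finite exact potential game has a pure Nash equilibrium, namely any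
maximizer of the potential φ. -/
theorem potential_game_pure_nash
    (ι : Type*) [Fintype ι] [DecidableEq ι] (A : ι → Type*) [∀ i, Fintype (A i)]
    [∀ i, Nonempty (A i)]
    (u : ι → (∀ i, A i) → ℝ) (φ : (∀ i, A i) → ℝ)
    (hpot : ∀ (i : ι) (a : ∀ i, A i) (a' a'' : A i),
      φ (Function.update a i a') - φ (Function.update a i a'') =
        u i (Function.update a i a') - u i (Function.update a i a'')) :
    (∀ a : ∀ i, A i, (∀ b, φ b ≤ φ a) →
      ∀ (i : ι) (a' : A i), u i (Function.update a i a') ≤ u i a) ∧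
    ∃ a : ∀ i, A i, ∀ (i : ι) (a' : A i), u i (Function.update a i a') ≤ u i a := by
  have key : ∀ a : ∀ i, A i, (∀ b, φ b ≤ φ a) →
      ∀ (i : ι) (a' : A i), u i (Function.update a i a') ≤ u i a := by
    intro a hmax i a'
    have h := hpot i a a' (a i)
    rw [Function.update_eq_self] at h
    have := hmax (Function.update a i a')
    linarith
  refine ⟨key, ?_⟩
  obtain ⟨a, ha⟩ := Finite.exists_max φ
  exact ⟨a, key a ha⟩
end
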